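/- Let m ≥ 2 be an integer and let Ω ⊂ [0, +∞) be a nonempty set that is open as a subset of ℝ and satisfies Ω = ⊕_{k=1}^m Ω. Then inf Ω = 0 and Ω = (0, +∞). -/
import Mathlib


noncomputable section

open MeasureTheory Filter Metric Real Classical
open scoped ENNReal Topology Pointwise RealInnerProductSpace ComplexConjugate

/-- `ℝⁿ` with its Euclidean structure. -/
abbrev Euc (n : ℕ) : Type := EuclideanSpace ℝ (Fin n)

theorem statement19 (k : ℕ) (Ω : Set ℝ) (hsub : Ω ⊆ Set.Ici 0)
    (hne : Ω.Nonempty) (hop : IsOpen Ω)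
    (hmink : Ω = {x : ℝ | ∃ y : Fin (k + 2) → ℝ, (∀ i, y i ∈ Ω) ∧ ∑ i, y i = x}) :
    sInf Ω = 0 ∧ Ω = Set.Ioi 0 := by
  have h0 : (0:ℝ) ∉ Ω := by
    intro h0
    obtain ⟨ε, hε, hb⟩ := Metric.isOpen_iff.1 hop 0 h0
    have hmem : -(ε/2) ∈ Ω := hb (by
      rw [Real.ball_eq_Ioo]; constructor <;> simp <;> linarith)
    have := hsub hmem
    simp at this; linarith
  have hpos : ∀ x ∈ Ω, 0 < x := fun x hx =>
    lt_of_le_of_ne (hsub hx) (fun h => h0 (h ▸ hx))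
  have hbdd : BddBelow Ω := ⟨0, fun x hx => hsub hx⟩
  have h1 : 0 ≤ sInf Ω := le_csInf hne fun x hx => hsub hx
  have hs0 : sInf Ω = 0 := by
    have h2 : ∀ x ∈ Ω, ((k:ℝ)+2) * sInf Ω ≤ x := by
      intro x hx
      have hx' : x ∈ {x : ℝ | ∃ y : Fin (k + 2) → ℝ, (∀ i, y i ∈ Ω) ∧ ∑ i, y i = x} :=
        hmink ▸ hx
      obtain ⟨y, hy, hsum⟩ := hx'
      calc ((k:ℝ)+2) * sInf Ω = ∑ _i : Fin (k+2), sInf Ω := by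
            rw [Finset.sum_const, nsmul_eq_mul, Finset.card_univ, Fintype.card_fin]; push_cast; ring
        _ ≤ ∑ i, y i := Finset.sum_le_sum fun i _ => csInf_le hbdd (hy i)
        _ = x := hsum
    have h3 : ((k:ℝ)+2) * sInf Ω ≤ sInf Ω := le_csInf hne h2
    nlinarith [Nat.cast_nonneg (α := ℝ) k]
  refine ⟨hs0, ?_⟩
  -- step lemma
  have hstep : ∀ b ∈ Ω, ∀ t ∈ Ω, t + ((k:ℝ)+1) * b ∈ Ω := by
    intro b hb t ht
    rw [hmink]
    refine ⟨fun j => if j = 0 then t else b, fun j => ?_, ?_⟩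
    · by_cases h : j = 0 <;> simp [h, hb, ht]
    · rw [Fin.sum_univ_succ]
      simp [Fin.succ_ne_zero, Finset.sum_const]
  ext x
  simp only [Set.mem_Ioi]
  constructor
  · exact hpos x
  · intro hx
    obtain ⟨a, ha, hax⟩ := exists_lt_of_csInf_lt hne (hs0 ▸ hx)
    obtain ⟨δ, hδ, hball⟩ := Metric.isOpen_iff.1 hop a ha
    rw [Real.ball_eq_Ioo] at hball
    have hk1 : (0:ℝ) < (k:ℝ)+1 := by positivity
    obtain ⟨b, hb, hbs⟩ := exists_lt_of_csInf_lt hne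
      (show sInf Ω < 2*δ/((k:ℝ)+1) by rw [hs0]; positivity)
    have hbpos := hpos b hb
    set c : ℝ := ((k:ℝ)+1) * b with hc
    have hcpos : 0 < c := by positivity
    have hclt : c < 2*δ := by
      rw [hc]
      calc ((k:ℝ)+1) * b < ((k:ℝ)+1) * (2*δ/((k:ℝ)+1)) := by
            exact mul_lt_mul_of_pos_left hbs hk1
        _ = 2*δ := by field_simp
    have hiter : ∀ i : ℕ, ∀ t ∈ Ω, t + (i:ℝ) * c ∈ Ω := by
      intro i
      induction i with
      | zero => simp
      | succ n ih =>
        intro t ht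
        have := hstep b hb (t + (n:ℝ)*c) (ih t ht)
        have heq : t + ((n:ℝ)+1) * c = t + (n:ℝ)*c + ((k:ℝ)+1)*b := by
          rw [hc]; ring
        push_cast
        rw [heq]; exact this
    have hex : ∃ i : ℕ, x - (i:ℝ) * c < a + δ := by
      obtain ⟨n, hn⟩ := exists_nat_gt (x / c)
      refine ⟨n, ?_⟩
      have : x < (n:ℝ) * c := by
        rw [← div_lt_iff₀ hcpos] at *; linarith [hn]
      have hapos := hpos a ha
      linarith
    set i := Nat.find hex with hi
    have hspec : x - (i:ℝ) * c < a + δ := Nat.find_spec hex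
    have hlow : a - δ < x - (i:ℝ) * c := by
      rcases Nat.eq_zero_or_pos i with h | h
      · rw [h]; simp; linarith
      · have hmin : ¬ (x - ((i-1 : ℕ):ℝ) * c < a + δ) :=
          Nat.find_min hex (by omega)
        push_neg at hmin
        have : ((i-1 : ℕ):ℝ) = (i:ℝ) - 1 := by
          have : (1:ℕ) ≤ i := h
          push_cast [Nat.cast_sub this]; ring
        rw [this] at hmin
        nlinarith
    have ht : x - (i:ℝ) * c ∈ Ω := hball ⟨hlow, hspec⟩
    have := hiter i _ ht
    simpa using this
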